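/- Let A be a one-dimensional Novikov algebra spanned by e with e∘e = 0, and let M be a 2-dimensional A-module with L, R the matrices of L_M(e), R_M(e). Then R² = 0. -/

import Mathlib

/-- let `A = ℂe` be the one-dimensional Novikov algebra with
`e∘e = 0` (so the product `mulA` vanishes on `e = 1`), and let `LM, RM` give a
module structure on the 2-dimensional space `Fin 2 → ℂ`.  Then the right action
`R = RM e` satisfies `R² = 0`. -/
theorem one_dim_module_R_sq_zero
    (mulA : ℂ →ₗ[ℂ] ℂ →ₗ[ℂ] ℂ) (hA : mulA 1 1 = 0)
    (LM RM : ℂ →ₗ[ℂ] Module.End ℂ (Fin 2 → ℂ))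
    (h1 : ∀ x y : ℂ, LM (mulA x y) = RM y * LM x)
    (h2 : ∀ x y : ℂ, RM (mulA x y) - RM y * RM x = LM x * RM y - RM y * LM x)
    (h3 : ∀ x y : ℂ, RM x * RM y = RM y * RM x)
    (h4 : ∀ x y : ℂ, LM x * LM y - LM y * LM x = LM (mulA x y - mulA y x)) :
    RM 1 * RM 1 = 0 := by
  set L := LM 1 with hL
  set R := RM 1 with hR
  -- R ∘ L = 0
  have hRL : R * L = 0 := by
    have := h1 1 1
    rw [hA, map_zero] at this
    exact this.symm
  have hRLv : ∀ v, R (L v) = 0 := by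
    intro v
    simpa [Module.End.mul_apply] using congrArg (fun f : Module.End ℂ (Fin 2 → ℂ) => f v) hRL
  -- key relation from h2
  have key : (0 : Module.End ℂ (Fin 2 → ℂ)) - R * R = L * R - R * L := by
    have := h2 1 1
    rw [hA, map_zero] at this
    exact this
  have hp : ∀ v, R (R v) = -(L (R v)) := by
    intro v
    have h := congrArg (fun f : Module.End ℂ (Fin 2 → ℂ) => f v) key
    simp [LinearMap.sub_apply, Module.End.mul_apply, hRLv] at h
    linear_combination -h
  -- R³ = 0
  have hR3 : R ^ 3 = 0 := by
    refine LinearMap.ext fun v => ?_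
    have : (R ^ 3) v = R (R (R v)) := by simp [pow_succ, Module.End.mul_apply]
    rw [this, hp v, map_neg, hRLv, neg_zero]
    rfl
  -- nilpotency index ≤ 2 in dimension 2
  have hker : LinearMap.ker (R ^ 3) = LinearMap.ker (R ^ Module.finrank ℂ (Fin 2 → ℂ)) := by
    apply Module.End.ker_pow_eq_ker_pow_finrank_of_le
    simp [Module.finrank_fin_fun]
  have hfr : Module.finrank ℂ (Fin 2 → ℂ) = 2 := Module.finrank_fin_fun ℂ
  rw [hfr] at hker
  have htop : LinearMap.ker (R ^ 2) = ⊤ := by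
    rw [← hker, hR3]
    exact LinearMap.ker_zero
  have h0 : R ^ 2 = 0 := LinearMap.ker_eq_top.mp htop
  calc RM 1 * RM 1 = R ^ 2 := (sq R).symm
    _ = 0 := h0
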